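/- Let f : ℝⁿ → ℝ be twice continuously differentiable and strongly convex with unique minimizer x*. If x(t) solves the Newton flow (∇²f(x))ẋ = -k∇f(x)·(1/‖∇f(x)‖ + ‖∇f(x)‖) with k = π/(2T_p), then x(t) converges to x* within time T_p for every initial point x(0) ∈ ℝⁿ. -/

import Mathlib

open Set Filter Topology

theorem aux_grad_zero {n : ℕ} {f : EuclideanSpace ℝ (Fin n) → ℝ} {m : ℝ} (hm : 0 < m)
    (hf : ContDiff ℝ 2 f) (hsc : StrongConvexOn Set.univ m f)
    {xstar : EuclideanSpace ℝ (Fin n)} (hmin : ∀ y, f xstar ≤ f y)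
    {p : EuclideanSpace ℝ (Fin n)} (hp : gradient f p = 0) : p = xstar := by
  have hd : Differentiable ℝ f := hf.differentiable (by norm_num)
  have hfd0 : fderiv ℝ f p = 0 := by
    have := congrArg (InnerProductSpace.toDual ℝ (EuclideanSpace ℝ (Fin n))) hp
    simpa [gradient] using this
  set v := xstar - p with hv
  set h : ℝ → ℝ := fun b => f (p + b • v) with hh
  have hline : ∀ b : ℝ, HasDerivAt (fun b : ℝ => p + b • v) v b := by
    intro b
    simpa using ((hasDerivAt_id b).smul_const v).const_add p
  have hh0 : HasDerivAt h 0 0 := by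
    have hF : HasFDerivAt f (0 : EuclideanSpace ℝ (Fin n) →L[ℝ] ℝ) (p + (0:ℝ) • v) := by
      simpa [hfd0] using (hd (p + (0:ℝ) • v)).hasFDerivAt
    have := hF.comp_hasDerivAt 0 (hline 0)
    simp at this
    exact this
  have key : ∀ b : ℝ, b ∈ Ioo (0:ℝ) 1 →
      (h b - h 0) / b ≤ -(1 - b) * (m / 2) * ‖p - xstar‖ ^ 2 := by
    intro b hb
    have hcomb := hsc.2 (mem_univ p) (mem_univ xstar)
      (show (0:ℝ) ≤ 1 - b by linarith [hb.2]) (le_of_lt hb.1)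
      (show (1 - b) + b = 1 by ring)
    simp only [smul_eq_mul] at hcomb
    have hpt : (1 - b) • p + b • xstar = p + b • v := by
      rw [hv]; module
    have h1 : h b ≤ (1-b) * f p + b * f xstar - (1-b) * b * (m/2 * ‖p - xstar‖^2) := by
      show f (p + b • v) ≤ _
      rw [← hpt]; exact hcomb
    have h2 : f xstar ≤ f p := hmin p
    have h00 : h 0 = f p := by simp [hh]
    have h3 : h b - h 0 ≤ -(1-b) * b * (m/2) * ‖p - xstar‖^2 := by
      nlinarith [mul_le_mul_of_nonneg_left h2 hb.1.le]
    rw [div_le_iff₀ hb.1]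
    nlinarith [h3]
  have hslope : Tendsto (fun b => (h b - h 0) / b) (𝓝[>] (0:ℝ)) (𝓝 0) := by
    have h2 : Tendsto (slope h 0) (𝓝[>] (0:ℝ)) (𝓝 0) :=
      (hasDerivAt_iff_tendsto_slope.mp hh0).mono_left
        (nhdsWithin_mono _ (fun y hy => ne_of_gt hy))
    refine h2.congr (fun b => ?_)
    simp [slope_def_field]
  have hrhs : Tendsto (fun b : ℝ => -(1 - b) * (m / 2) * ‖p - xstar‖ ^ 2) (𝓝[>] (0:ℝ))
      (𝓝 (-(m/2) * ‖p - xstar‖ ^ 2)) := by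
    have hc : ContinuousAt (fun b : ℝ => -(1 - b) * (m / 2) * ‖p - xstar‖ ^ 2) 0 := by fun_prop
    have := (hc.continuousWithinAt (s := Ioi (0:ℝ))).tendsto
    simpa using this
  have hle : (0:ℝ) ≤ -(m/2) * ‖p - xstar‖ ^ 2 := by
    refine le_of_tendsto_of_tendsto hslope hrhs ?_
    filter_upwards [Ioo_mem_nhdsGT one_pos] with b hb
    exact key b hb
  have hd2nn : (0:ℝ) ≤ ‖p - xstar‖ ^ 2 := by positivity
  have hz : ‖p - xstar‖ ^ 2 = 0 := by nlinarith
  have : p - xstar = 0 := by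
    have h4 : ‖p - xstar‖ = 0 := by
      exact pow_eq_zero_iff (two_ne_zero) |>.mp hz
    exact norm_eq_zero.mp h4
  exact sub_eq_zero.mp this

/-- Newton flow `(∇²f(x))ẋ = -k∇f(x)·(1/‖∇f(x)‖ + ‖∇f(x)‖)` for a twice continuously
differentiable strongly convex `f` with unique minimizer `xstar`, `k = π/(2 T_p)`:
the trajectory reaches `xstar` within time `T_p`, for every initial point. -/
theorem stmt_5 (n : ℕ) (f : EuclideanSpace ℝ (Fin n) → ℝ) (m : ℝ) (hm : 0 < m)
    (hf : ContDiff ℝ 2 f) (hsc : StrongConvexOn Set.univ m f)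
    (xstar : EuclideanSpace ℝ (Fin n)) (hmin : ∀ y, f xstar ≤ f y)
    (Tp k : ℝ) (hTp : 0 < Tp) (hk : k = Real.pi / (2 * Tp))
    (x x' : ℝ → EuclideanSpace ℝ (Fin n))
    (hx : ∀ t, 0 ≤ t → HasDerivAt x (x' t) t)
    (hflow : ∀ t, 0 ≤ t → gradient f (x t) ≠ 0 →
      (fderiv ℝ (gradient f) (x t)) (x' t) =
        (-(k * (1 / ‖gradient f (x t)‖ + ‖gradient f (x t)‖))) • gradient f (x t))
    (hstat : ∀ t, 0 ≤ t → gradient f (x t) = 0 → x' t = 0) :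
    ∃ T, 0 ≤ T ∧ T ≤ Tp ∧ ∀ t, T ≤ t → x t = xstar := by
  have hkpos : 0 < k := by rw [hk]; positivity
  -- gradient is differentiable
  have hgd : Differentiable ℝ (gradient f) := by
    have h1 : ContDiff ℝ 1 (fderiv ℝ f) := hf.fderiv_right (by norm_num)
    have h2 : Differentiable ℝ (fderiv ℝ f) := h1.differentiable one_ne_zero
    have : gradient f = fun p =>
        (InnerProductSpace.toDual ℝ (EuclideanSpace ℝ (Fin n))).symm (fderiv ℝ f p) := rfl
    rw [this]
    exact (InnerProductSpace.toDual ℝ (EuclideanSpace ℝ (Fin n))).symm.toContinuousLinearEquiv.differentiable.comp h2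
  set y : ℝ → EuclideanSpace ℝ (Fin n) := fun t => gradient f (x t) with hy
  set y' : ℝ → EuclideanSpace ℝ (Fin n) := fun t => fderiv ℝ (gradient f) (x t) (x' t) with hy'
  have hyd : ∀ t, 0 ≤ t → HasDerivAt y (y' t) t := fun t ht =>
    (hgd (x t)).hasFDerivAt.comp_hasDerivAt t (hx t ht)
  set r : ℝ → ℝ := fun t => ‖y t‖ ^ 2 with hr
  set r' : ℝ → ℝ := fun t => 2 * inner ℝ (y' t) (y t) with hrd
  have hrdAt : ∀ t, 0 ≤ t → HasDerivAt r (r' t) t := by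
    intro t ht
    have := (hyd t ht).inner ℝ (hyd t ht)
    have heq : (fun s => (inner ℝ (y s) (y s) : ℝ)) = r := by
      funext s
      show (inner ℝ (y s) (y s) : ℝ) = ‖y s‖ ^ 2
      exact real_inner_self_eq_norm_sq (y s)
    rw [heq] at this
    refine this.congr_deriv (Eq.symm ?_)
    show (2 * inner ℝ (y' t) (y t) : ℝ) = _
    rw [real_inner_comm (y t) (y' t)]; ring
  have hrnn : ∀ t, 0 ≤ r t := fun t => by positivity
  -- value of r' when y t ≠ 0
  have hr'eq : ∀ t, 0 ≤ t → y t ≠ 0 → r' t = -(2 * k) * (1 + r t) * Real.sqrt (r t) := by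
    intro t ht hne
    have hfl := hflow t ht hne
    have hnpos : 0 < ‖y t‖ := norm_pos_iff.mpr hne
    have hsq : Real.sqrt (r t) = ‖y t‖ := by
      rw [hr]; exact Real.sqrt_sq (norm_nonneg _)
    have h5 : y' t = (-(k * (1 / ‖y t‖ + ‖y t‖))) • y t := hfl
    show (2 : ℝ) * inner ℝ (y' t) (y t) = _
    rw [h5, real_inner_smul_left, real_inner_self_eq_norm_sq, hsq]
    have hrt : r t = ‖y t‖ ^ 2 := rfl
    rw [hrt]
    field_simp
  have hr'le : ∀ t, 0 ≤ t → r' t ≤ 0 := by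
    intro t ht
    by_cases hne : y t = 0
    · have hx0 := hstat t ht hne
      have hy0 : y' t = 0 := by
        show fderiv ℝ (gradient f) (x t) (x' t) = 0
        rw [hx0]; simp
      show (2 : ℝ) * inner ℝ (y' t) (y t) ≤ 0
      rw [hy0]; simp
    · rw [hr'eq t ht hne]
      have h1 : 0 ≤ 1 + r t := by have := hrnn t; linarith
      have h2 : 0 ≤ Real.sqrt (r t) := Real.sqrt_nonneg _
      have h3 : 0 ≤ 2 * k * ((1 + r t) * Real.sqrt (r t)) :=
        mul_nonneg (by linarith) (mul_nonneg h1 h2)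
      nlinarith [h3]
  -- r is antitone on [0, ∞)
  have hrant : AntitoneOn r (Ici (0:ℝ)) := by
    apply antitoneOn_of_deriv_nonpos (convex_Ici 0)
    · exact fun t ht => (hrdAt t ht).continuousAt.continuousWithinAt
    · intro t ht
      rw [interior_Ici] at ht
      exact (hrdAt t (le_of_lt ht)).differentiableAt.differentiableWithinAt
    · intro t ht
      rw [interior_Ici] at ht
      rw [(hrdAt t (le_of_lt ht)).deriv]
      exact hr'le t (le_of_lt ht)
  -- Claim A : the gradient vanishes at some time in [0, Tp]
  have claimA : ∃ T ∈ Icc (0:ℝ) Tp, y T = 0 := by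
    by_contra hA
    push_neg at hA
    set φ : ℝ → ℝ := fun t => Real.arctan (Real.sqrt (r t)) with hφ
    have hφd : ∀ t ∈ Icc (0:ℝ) Tp, HasDerivAt φ (-k) t := by
      intro t ht
      have hne := hA t ht
      have hrpos : 0 < r t := pow_pos (norm_pos_iff.mpr hne) 2
      have h1 := (Real.hasDerivAt_sqrt (ne_of_gt hrpos)).comp t (hrdAt t ht.1)
      have h2 := (Real.hasDerivAt_arctan (Real.sqrt (r t))).comp t h1
      refine h2.congr_deriv ?_
      rw [Real.sq_sqrt hrpos.le, hr'eq t ht.1 hne]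
      have hs : 0 < Real.sqrt (r t) := Real.sqrt_pos.mpr hrpos
      have h3 : 0 < 1 + r t := by linarith
      field_simp
    have hφcont : ContinuousOn φ (Icc (0:ℝ) Tp) :=
      fun t ht => (hφd t ht).continuousAt.continuousWithinAt
    set ψ : ℝ → ℝ := fun t => φ t + k * t with hψ
    have hψd : ∀ t ∈ Icc (0:ℝ) Tp, HasDerivAt ψ 0 t := by
      intro t ht
      have := (hφd t ht).add ((hasDerivAt_id t).const_mul k)
      simp at this
      exact this
    have hψc : ContinuousOn ψ (Icc (0:ℝ) Tp) :=
      fun t ht => (hψd t ht).continuousAt.continuousWithinAt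
    have hmono : MonotoneOn ψ (Icc (0:ℝ) Tp) := by
      apply monotoneOn_of_deriv_nonneg (convex_Icc 0 Tp) hψc
      · intro t ht
        rw [interior_Icc] at ht
        exact (hψd t (Ioo_subset_Icc_self ht)).differentiableAt.differentiableWithinAt
      · intro t ht
        rw [interior_Icc] at ht
        rw [(hψd t (Ioo_subset_Icc_self ht)).deriv]
    have hanti : AntitoneOn ψ (Icc (0:ℝ) Tp) := by
      apply antitoneOn_of_deriv_nonpos (convex_Icc 0 Tp) hψc
      · intro t ht
        rw [interior_Icc] at ht
        exact (hψd t (Ioo_subset_Icc_self ht)).differentiableAt.differentiableWithinAt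
      · intro t ht
        rw [interior_Icc] at ht
        rw [(hψd t (Ioo_subset_Icc_self ht)).deriv]
    have hmem0 : (0:ℝ) ∈ Icc (0:ℝ) Tp := ⟨le_refl 0, hTp.le⟩
    have hmemT : Tp ∈ Icc (0:ℝ) Tp := ⟨hTp.le, le_refl Tp⟩
    have heqψ : ψ Tp = ψ 0 :=
      le_antisymm (hanti hmem0 hmemT hTp.le) (hmono hmem0 hmemT hTp.le)
    have hkTp : k * Tp = Real.pi / 2 := by
      rw [hk]; field_simp
    have hφTp_pos : 0 < φ Tp := by
      have hs : 0 < Real.sqrt (r Tp) :=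
        Real.sqrt_pos.mpr (pow_pos (norm_pos_iff.mpr (hA Tp hmemT)) 2)
      have := Real.arctan_strictMono hs
      rw [Real.arctan_zero] at this
      exact this
    have hφ0_lt : φ 0 < Real.pi / 2 := Real.arctan_lt_pi_div_two _
    rw [hψ] at heqψ
    simp only [mul_zero, add_zero] at heqψ
    rw [hkTp] at heqψ
    linarith
  obtain ⟨T, hTmem, hT0⟩ := claimA
  refine ⟨T, hTmem.1, hTmem.2, fun t ht => ?_⟩
  have ht0 : (0:ℝ) ≤ t := le_trans hTmem.1 ht
  have hrt : r t = 0 := by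
    have h1 : r t ≤ r T := hrant hTmem.1 ht0 ht
    have h2 : r T = 0 := by show ‖y T‖ ^ 2 = 0; rw [hT0]; simp
    have := hrnn t
    linarith
  have hyt : y t = 0 := by
    have : ‖y t‖ = 0 := by
      have h5 : ‖y t‖ ^ 2 = 0 := hrt
      exact pow_eq_zero_iff two_ne_zero |>.mp h5
    exact norm_eq_zero.mp this
  exact aux_grad_zero hm hf hsc hmin hyt
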